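/- Let Y be a nonempty finite type and for θ in an open neighborhood of θ₀ ∈ ℝ^k let π_θ : Y → ℝ be probability mass functions with π_θ(y) > 0 for all y, continuously differentiable in θ. Let r : Y → ℝ with r(y) ∈ {0,1} for all y, set p(θ) = Σ_y π_θ(y) r(y), g = ∇_θ p(θ)|_{θ₀} ∈ ℝ^k, and assume the Fisher information matrix F = Σ_y π_{θ₀}(y)(∇_θ log π_θ(y)|_{θ₀})(∇_θ log π_θ(y)|_{θ₀})ᵀ is nonsingular. Then gᵀF⁻¹g ≤ p(θ₀)·(1 − p(θ₀)), and hence for every δ > 0, √(2δ·gᵀF⁻¹g) ≤ √(2δ·p(θ₀)(1 − p(θ₀))). -/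

import Mathlib

open Matrix

/-- Prompt difficulty caps the optimization potential: for a strictly positive,
continuously differentiable policy `P θ` on a finite response set `Y` defined on an
open neighborhood `U` of `θ₀`, binary reward `r`, accuracy `p θ = Σ_y P θ y · r y` with
gradient `g` at `θ₀`, and nonsingular Fisher information matrix `F` at `θ₀`, one has
`gᵀF⁻¹g ≤ p θ₀ · (1 − p θ₀)`, hence for every `δ > 0`,
`√(2δ·gᵀF⁻¹g) ≤ √(2δ·p θ₀·(1 − p θ₀))`. -/
theorem stmt_13 {k : ℕ} (Y : Type) [Fintype Y] [Nonempty Y]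
    (U : Set (Fin k → ℝ)) (hU : IsOpen U) (θ₀ : Fin k → ℝ) (hθ₀ : θ₀ ∈ U)
    (P : (Fin k → ℝ) → Y → ℝ)
    (hpos : ∀ θ ∈ U, ∀ y : Y, 0 < P θ y)
    (hsum : ∀ θ ∈ U, ∑ y : Y, P θ y = 1)
    (hdiff : ∀ y : Y, ContDiffOn ℝ 1 (fun θ => P θ y) U)
    (r : Y → ℝ) (hr : ∀ y, r y = 0 ∨ r y = 1)
    (p : (Fin k → ℝ) → ℝ) (hp : ∀ θ, p θ = ∑ y : Y, P θ y * r y)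
    (g : Fin k → ℝ) (hg : ∀ i, g i = fderiv ℝ p θ₀ (Pi.single i 1))
    -- score vectors and the Fisher information matrix at `θ₀`
    (score : Y → Fin k → ℝ)
    (hscore : ∀ y i, score y i =
      fderiv ℝ (fun θ => P θ y) θ₀ (Pi.single i 1) / P θ₀ y)
    (F : Matrix (Fin k) (Fin k) ℝ)
    (hF : ∀ a b, F a b = ∑ y : Y, P θ₀ y * (score y a * score y b))
    (hFnonsing : IsUnit F.det) :
    g ⬝ᵥ F⁻¹.mulVec g ≤ p θ₀ * (1 - p θ₀) ∧
    ∀ δ : ℝ, 0 < δ →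
      Real.sqrt (2 * δ * (g ⬝ᵥ F⁻¹.mulVec g))
        ≤ Real.sqrt (2 * δ * (p θ₀ * (1 - p θ₀))) := by
  classical
  have hmem : U ∈ nhds θ₀ := hU.mem_nhds hθ₀
  have hdAt : ∀ y : Y, DifferentiableAt ℝ (fun θ => P θ y) θ₀ := fun y =>
    ((hdiff y).contDiffAt hmem).differentiableAt one_ne_zero
  set P0 : Y → ℝ := fun y => P θ₀ y with hP0
  have hP0pos : ∀ y, 0 < P0 y := fun y => hpos θ₀ hθ₀ y
  -- P θ₀ y * score y i = derivative of P in direction e_i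
  have hPs : ∀ y i, P0 y * score y i = fderiv ℝ (fun θ => P θ y) θ₀ (Pi.single i 1) := by
    intro y i
    rw [hscore y i, mul_div_cancel₀]
    exact (hP0pos y).ne'
  -- zero mean of score
  have hzero : ∀ i, ∑ y : Y, P0 y * score y i = 0 := by
    intro i
    have h1 : fderiv ℝ (fun θ => ∑ y : Y, P θ y) θ₀ =
        ∑ y : Y, fderiv ℝ (fun θ => P θ y) θ₀ :=
      fderiv_fun_sum (fun y _ => hdAt y)
    have h2 : fderiv ℝ (fun θ => ∑ y : Y, P θ y) θ₀ = 0 := by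
      have heq : (fun θ => ∑ y : Y, P θ y) =ᶠ[nhds θ₀] (fun _ => (1 : ℝ)) :=
        Filter.eventuallyEq_of_mem hmem (fun θ hθ => hsum θ hθ)
      rw [heq.fderiv_eq]
      exact fderiv_const_apply 1
    have h3 : (0 : (Fin k → ℝ) →L[ℝ] ℝ) = ∑ y : Y, fderiv ℝ (fun θ => P θ y) θ₀ := by
      rw [← h1, h2]
    calc ∑ y : Y, P0 y * score y i
        = ∑ y : Y, fderiv ℝ (fun θ => P θ y) θ₀ (Pi.single i 1) := by
          simp_rw [hPs]
      _ = ((∑ y : Y, fderiv ℝ (fun θ => P θ y) θ₀) : (Fin k → ℝ) →L[ℝ] ℝ) (Pi.single i 1) := by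
          rw [ContinuousLinearMap.sum_apply]
      _ = 0 := by rw [← h3]; rfl
  -- formula for g
  have hgform : ∀ i, g i = ∑ y : Y, P0 y * r y * score y i := by
    intro i
    rw [hg i]
    have hpd : fderiv ℝ p θ₀ = ∑ y : Y, r y • fderiv ℝ (fun θ => P θ y) θ₀ := by
      have hpe : p = fun θ => ∑ y : Y, P θ y * r y := funext hp
      rw [hpe, fderiv_fun_sum (fun y _ => (hdAt y).mul_const (r y))]
      exact Finset.sum_congr rfl (fun y _ => fderiv_mul_const (hdAt y) (r y))
    rw [hpd, ContinuousLinearMap.sum_apply]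
    refine Finset.sum_congr rfl (fun y _ => ?_)
    rw [ContinuousLinearMap.smul_apply, ← hPs y i]
    simp [mul_comm, mul_assoc, mul_left_comm]
  -- basic facts about p θ₀
  have hsum0 : ∑ y : Y, P0 y = 1 := hsum θ₀ hθ₀
  have hp0 : p θ₀ = ∑ y : Y, P0 y * r y := hp θ₀
  have hp_nonneg : 0 ≤ p θ₀ := by
    rw [hp0]
    refine Finset.sum_nonneg (fun y _ => ?_)
    rcases hr y with h | h <;> simp [h, (hP0pos y).le]
  have hp_le_one : p θ₀ ≤ 1 := by
    rw [hp0, ← hsum0]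
    refine Finset.sum_le_sum (fun y _ => ?_)
    rcases hr y with h | h <;> simp [h, (hP0pos y).le]
  -- variance of r
  have hvar : ∑ y : Y, P0 y * (r y - p θ₀) ^ 2 = p θ₀ * (1 - p θ₀) := by
    have hrsq : ∀ y, r y * r y = r y := by
      intro y; rcases hr y with h | h <;> simp [h]
    have : ∑ y : Y, P0 y * (r y - p θ₀) ^ 2
        = (∑ y : Y, P0 y * r y) - 2 * p θ₀ * (∑ y : Y, P0 y * r y)
          + p θ₀ ^ 2 * (∑ y : Y, P0 y) := by
      rw [Finset.mul_sum, Finset.mul_sum, ← Finset.sum_sub_distrib, ← Finset.sum_add_distrib]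
      refine Finset.sum_congr rfl (fun y _ => ?_)
      rcases hr y with h | h <;> rw [h] <;> ring
    rw [this, hsum0, ← hp0]
    ring
  -- the key vector
  set v : Fin k → ℝ := F⁻¹.mulVec g with hv
  set q : ℝ := g ⬝ᵥ F⁻¹.mulVec g with hq
  have hFv : F.mulVec v = g := by
    rw [hv, mulVec_mulVec, Matrix.mul_nonsing_inv F hFnonsing, one_mulVec]
  -- v ⬝ᵥ F.mulVec v = ∑_y P0 y * (∑_i v i * score y i)^2
  have hquad : v ⬝ᵥ F.mulVec v = ∑ y : Y, P0 y * (∑ i, v i * score y i) ^ 2 := by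
    have key : ∀ y : Y, P0 y * (∑ i, v i * score y i) ^ 2
        = ∑ a, ∑ b, v a * (P0 y * (score y a * score y b)) * v b := by
      intro y
      rw [sq, Finset.sum_mul_sum, Finset.mul_sum]
      refine Finset.sum_congr rfl fun a _ => ?_
      rw [Finset.mul_sum]
      refine Finset.sum_congr rfl fun b _ => ?_
      ring
    have swap : ∀ (f : Y → Fin k → Fin k → ℝ),
        ∑ y : Y, ∑ a, ∑ b, f y a b = ∑ a, ∑ b, ∑ y : Y, f y a b := by
      intro f
      rw [Finset.sum_comm]
      exact Finset.sum_congr rfl fun a _ => Finset.sum_comm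
    simp_rw [key]
    rw [swap]
    simp only [dotProduct, mulVec, dotProduct, hF]
    refine Finset.sum_congr rfl fun a _ => ?_
    rw [Finset.mul_sum]
    refine Finset.sum_congr rfl fun b _ => ?_
    rw [Finset.sum_mul, Finset.mul_sum]
    refine Finset.sum_congr rfl fun y _ => ?_
    ring
  -- covariance identity: ∑_y P0 y * (r y - p θ₀) * (∑_i v i * score y i) = q
  have hcov : ∑ y : Y, P0 y * (r y - p θ₀) * (∑ i, v i * score y i) = q := by
    have h1 : ∑ y : Y, P0 y * r y * (∑ i, v i * score y i) = q := by
      have : ∀ y : Y, P0 y * r y * (∑ i, v i * score y i)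
          = ∑ i, v i * (P0 y * r y * score y i) := by
        intro y; rw [Finset.mul_sum]; exact Finset.sum_congr rfl (fun i _ => by ring)
      simp_rw [this]
      rw [Finset.sum_comm]
      have : ∀ i, ∑ y : Y, v i * (P0 y * r y * score y i) = v i * g i := by
        intro i; rw [← Finset.mul_sum, ← hgform i]
      simp_rw [this]
      rw [hq, dotProduct_comm, ← hv]
      rfl
    have h2 : ∑ y : Y, P0 y * p θ₀ * (∑ i, v i * score y i) = 0 := by
      have : ∀ y : Y, P0 y * p θ₀ * (∑ i, v i * score y i)
          = ∑ i, p θ₀ * v i * (P0 y * score y i) := by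
        intro y; rw [Finset.mul_sum]; exact Finset.sum_congr rfl (fun i _ => by ring)
      simp_rw [this]
      rw [Finset.sum_comm]
      refine Finset.sum_eq_zero (fun i _ => ?_)
      rw [← Finset.mul_sum, hzero i, mul_zero]
    calc ∑ y : Y, P0 y * (r y - p θ₀) * (∑ i, v i * score y i)
        = (∑ y : Y, P0 y * r y * (∑ i, v i * score y i))
          - ∑ y : Y, P0 y * p θ₀ * (∑ i, v i * score y i) := by
          rw [← Finset.sum_sub_distrib]
          exact Finset.sum_congr rfl (fun y _ => by ring)
      _ = q := by rw [h1, h2, sub_zero]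
  -- Cauchy-Schwarz
  have hCS : q ^ 2 ≤ (p θ₀ * (1 - p θ₀)) * (v ⬝ᵥ F.mulVec v) := by
    have := Finset.sum_mul_sq_le_sq_mul_sq Finset.univ
      (fun y : Y => Real.sqrt (P0 y) * (r y - p θ₀))
      (fun y : Y => Real.sqrt (P0 y) * (∑ i, v i * score y i))
    have hsq : ∀ y : Y, Real.sqrt (P0 y) * Real.sqrt (P0 y) = P0 y :=
      fun y => Real.mul_self_sqrt (hP0pos y).le
    have e1 : ∑ y : Y, (Real.sqrt (P0 y) * (r y - p θ₀)) *
        (Real.sqrt (P0 y) * (∑ i, v i * score y i))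
        = ∑ y : Y, P0 y * (r y - p θ₀) * (∑ i, v i * score y i) := by
      refine Finset.sum_congr rfl (fun y _ => ?_)
      rw [mul_mul_mul_comm, hsq y, mul_assoc]
    have e2 : ∑ y : Y, (Real.sqrt (P0 y) * (r y - p θ₀)) ^ 2
        = ∑ y : Y, P0 y * (r y - p θ₀) ^ 2 := by
      refine Finset.sum_congr rfl (fun y _ => ?_)
      rw [mul_pow, Real.sq_sqrt (hP0pos y).le]
    have e3 : ∑ y : Y, (Real.sqrt (P0 y) * (∑ i, v i * score y i)) ^ 2
        = ∑ y : Y, P0 y * (∑ i, v i * score y i) ^ 2 := by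
      refine Finset.sum_congr rfl (fun y _ => ?_)
      rw [mul_pow, Real.sq_sqrt (hP0pos y).le]
    rw [e1, e2, e3, hcov, hvar, ← hquad] at this
    exact this
  have hvFv : v ⬝ᵥ F.mulVec v = q := by rw [hFv, hq, dotProduct_comm, hv]
  rw [hvFv] at hCS
  have hpp : 0 ≤ p θ₀ * (1 - p θ₀) := mul_nonneg hp_nonneg (by linarith)
  have hmain : q ≤ p θ₀ * (1 - p θ₀) := by nlinarith [sq_nonneg q, sq_nonneg (q - p θ₀ * (1 - p θ₀))]
  refine ⟨hmain, fun δ hδ => ?_⟩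
  apply Real.sqrt_le_sqrt
  have h2 := mul_le_mul_of_nonneg_left hmain (by linarith : (0:ℝ) ≤ 2 * δ)
  linarith
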